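/- Suppose r₁r₂ = 1 with r₁, r₂ > 0, μ₁, μ₂ > 0, |ρ| < 1. Let y₂ = -2(r₁μ₁ + μ₂)/(1 + r₁² + 2ρr₁) and x₁ = -2(r₂μ₂ + μ₁)/(1 + r₂² + 2ρr₂). Then x₁ = r₁y₂, and K(x₁, y₂) = 0 where K(x,y) = (1/2)(x² + y² + 2ρxy) + μ₁x + μ₂y. Consequently, the function f(u,v) = exp(ux₁ + vy₂) satisfies the elliptic PDE (1/2)(f_uu + f_vv + 2ρf_uv) + μ₁f_u + μ₂f_v = 0 on the quadrant. -/

import Mathlib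

private lemma dexp1 (a c b : ℝ) :
    deriv (fun t => Real.exp (t * a + c)) b = a * Real.exp (b * a + c) := by
  have h : HasDerivAt (fun t : ℝ => Real.exp (t * a + c)) (Real.exp (b * a + c) * (1 * a)) b :=
    (((hasDerivAt_id b).mul_const a).add_const c).exp
  simpa [mul_comm] using h.deriv

private lemma dexp2 (a c b : ℝ) :
    deriv (fun t => Real.exp (c + t * a)) b = a * Real.exp (c + b * a) := by
  have h : HasDerivAt (fun t : ℝ => Real.exp (c + t * a)) (Real.exp (c + b * a) * (1 * a)) b :=
    (((hasDerivAt_id b).mul_const a).const_add c).exp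
  simpa [mul_comm] using h.deriv

private lemma dexp1' (k a c b : ℝ) :
    deriv (fun t => k * Real.exp (t * a + c)) b = k * (a * Real.exp (b * a + c)) := by
  have h : HasDerivAt (fun t : ℝ => k * Real.exp (t * a + c))
      (k * (Real.exp (b * a + c) * (1 * a))) b :=
    ((((hasDerivAt_id b).mul_const a).add_const c).exp).const_mul k
  simpa [mul_comm] using h.deriv

private lemma dexp2' (k a c b : ℝ) :
    deriv (fun t => k * Real.exp (c + t * a)) b = k * (a * Real.exp (c + b * a)) := by
  have h : HasDerivAt (fun t : ℝ => k * Real.exp (c + t * a))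
      (k * (Real.exp (c + b * a) * (1 * a))) b :=
    ((((hasDerivAt_id b).mul_const a).const_add c).exp).const_mul k
  simpa [mul_comm] using h.deriv

private lemma pde_aux (ρ μ₁ μ₂ x y : ℝ)
    (hK : (1 / 2) * (x ^ 2 + y ^ 2 + 2 * ρ * x * y) + μ₁ * x + μ₂ * y = 0) (u v : ℝ) :
    (1 / 2) * (deriv (fun u' => deriv (fun u'' => Real.exp (u'' * x + v * y)) u') u
        + deriv (fun v' => deriv (fun v'' => Real.exp (u * x + v'' * y)) v') v
        + 2 * ρ * deriv (fun u' => deriv (fun v' => Real.exp (u' * x + v' * y)) v) u)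
      + μ₁ * deriv (fun u' => Real.exp (u' * x + v * y)) u
      + μ₂ * deriv (fun v' => Real.exp (u * x + v' * y)) v = 0 := by
  simp only [dexp1, dexp2, dexp1', dexp2']
  linear_combination Real.exp (u * x + v * y) * hK

/-- Dual skew symmetry: if `r₁ r₂ = 1`, then `x₁ = r₁ y₂`, `K(x₁, y₂) = 0`, and
`f(u,v) = exp(u x₁ + v y₂)` satisfies the elliptic PDE
`(1/2)(f_uu + f_vv + 2ρ f_uv) + μ₁ f_u + μ₂ f_v = 0` on the quadrant. -/
theorem dual_skew_symmetry_pde (μ₁ μ₂ ρ r₁ r₂ : ℝ) (hμ₁ : 0 < μ₁) (hμ₂ : 0 < μ₂)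
    (hρ : |ρ| < 1) (hr₁ : 0 < r₁) (hr₂ : 0 < r₂) (hsym : r₁ * r₂ = 1) :
    let x₁ : ℝ := -2 * (r₂ * μ₂ + μ₁) / (1 + r₂ ^ 2 + 2 * ρ * r₂)
    let y₂ : ℝ := -2 * (r₁ * μ₁ + μ₂) / (1 + r₁ ^ 2 + 2 * ρ * r₁)
    let f : ℝ → ℝ → ℝ := fun u v => Real.exp (u * x₁ + v * y₂)
    x₁ = r₁ * y₂ ∧
    (1 / 2) * (x₁ ^ 2 + y₂ ^ 2 + 2 * ρ * x₁ * y₂) + μ₁ * x₁ + μ₂ * y₂ = 0 ∧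
    ∀ u v : ℝ, 0 ≤ u → 0 ≤ v →
      (1 / 2) * (deriv (fun u' => deriv (fun u'' => f u'' v) u') u
          + deriv (fun v' => deriv (fun v'' => f u v'') v') v
          + 2 * ρ * deriv (fun u' => deriv (fun v' => f u' v') v) u)
        + μ₁ * deriv (fun u' => f u' v) u + μ₂ * deriv (fun v' => f u v') v = 0 := by
  have hρ' := abs_lt.mp hρ
  have hD₁ : (0:ℝ) < 1 + r₁ ^ 2 + 2 * ρ * r₁ := by nlinarith [sq_nonneg (1 - r₁)]
  have hD₂ : (0:ℝ) < 1 + r₂ ^ 2 + 2 * ρ * r₂ := by nlinarith [sq_nonneg (1 - r₂)]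
  intro x₁ y₂ f
  have hr₂' : r₂ = r₁⁻¹ :=
    eq_inv_of_mul_eq_one_left (by linarith [mul_comm r₁ r₂, hsym] : r₂ * r₁ = 1)
  have hD₂' : (0:ℝ) < 1 + r₁⁻¹ ^ 2 + 2 * ρ * r₁⁻¹ := by rw [← hr₂']; exact hD₂
  have hx : x₁ = r₁ * y₂ := by
    simp only [x₁, y₂, hr₂']
    rw [mul_div_assoc', div_eq_div_iff hD₂'.ne' hD₁.ne']
    field_simp
    ring
  have hy : y₂ * (1 + r₁ ^ 2 + 2 * ρ * r₁) = -2 * (r₁ * μ₁ + μ₂) := by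
    simp only [y₂]; rw [div_mul_cancel₀ _ hD₁.ne']
  have hK : (1 / 2) * (x₁ ^ 2 + y₂ ^ 2 + 2 * ρ * x₁ * y₂) + μ₁ * x₁ + μ₂ * y₂ = 0 := by
    rw [hx]
    linear_combination (y₂ / 2) * hy
  exact ⟨hx, hK, fun u v _ _ => pde_aux ρ μ₁ μ₂ x₁ y₂ hK u v⟩
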